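/- (Lower bound on the per-instant gap in the model space, contextual case.) Suppose the contextual bandit instance μ is an interior point of C^X = ⋂_{x∈X} C^x_{OPT(x)}. Then there exists Δ_min > 0 such that for every admissible sampling distribution Λ, every context x ∈ X, and every arm a ≠ OPT(x), one has φ(x,OPT(x))^⊤ P^Λ(μ) − φ(x,a)^⊤ P^Λ(μ) ≥ Δ_min. -/
import Mathlib


open Matrix BigOperators
open scoped Classical

noncomputable section

variable {X A : Type*}

/-- The greedy region of arm `a` (at a fixed context): vectors in `ℝ^{|A|}` whose
(strictly) best arm is `a`. -/
def cGreedy (A : Type*) (a : A) : Set (A → ℝ) :=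
  {v | ∀ b, b ≠ a → v b < v a}

/-- The context-specific feature matrix `Φ_x`. -/
def ctxMatrix {d : ℕ} (Φ : Matrix (X × A) (Fin d) ℝ) (x : X) : Matrix A (Fin d) ℝ :=
  fun a j => Φ (x, a) j

/-- The context-specific reward vector `μ_x`. -/
def ctxReward (μ : X × A → ℝ) (x : X) : A → ℝ :=
  fun a => μ (x, a)

/-- The robust parameter region `Θ^x_a` for context `x`. -/
def cRobustParam {d : ℕ} (Φ : Matrix (X × A) (Fin d) ℝ) (x : X) (a : A) :
    Set (Fin d → ℝ) :=
  {θ | (ctxMatrix Φ x).mulVec θ ∈ cGreedy A a}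

/-- A sampling distribution over context-arm pairs: a point of the simplex `Δ_{XA}`. -/
def IsSimplexXA [Fintype X] [Fintype A] (α : X × A → ℝ) : Prop :=
  (∀ p, 0 ≤ α p) ∧ ∑ p, α p = 1

/-- The weighted Gram matrix `Φᵀ Λ Φ` with `Λ = diag α`. -/
def gramXA [Fintype X] [Fintype A] {d : ℕ} (Φ : Matrix (X × A) (Fin d) ℝ)
    (α : X × A → ℝ) : Matrix (Fin d) (Fin d) ℝ :=
  Φᵀ * Matrix.diagonal α * Φ

/-- The model estimate `P^Λ(μ) = (Φᵀ Λ Φ)⁻¹ Φᵀ Λ μ` under `Λ = diag α`. -/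
def modelEstXA [Fintype X] [Fintype A] {d : ℕ} (Φ : Matrix (X × A) (Fin d) ℝ)
    (α : X × A → ℝ) (μ : X × A → ℝ) : Fin d → ℝ :=
  (gramXA Φ α)⁻¹ *ᵥ (Φᵀ *ᵥ (Matrix.diagonal α *ᵥ μ))

/-- The robust observation region `C^x_a` for context `x` and arm `a`. -/
def cRobustObs [Fintype X] [Fintype A] {d : ℕ} (Φ : Matrix (X × A) (Fin d) ℝ)
    (x : X) (a : A) : Set (X × A → ℝ) :=
  {μ | ctxReward μ x ∈ cGreedy A a ∧
    ∀ α : X × A → ℝ, IsSimplexXA α → IsUnit (gramXA Φ α).det →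
      modelEstXA Φ α μ ∈ cRobustParam Φ x a}

/-- Linearity of the model estimate along directions of the form `Φ v`. -/
lemma modelEst_sub_mulVec [Fintype X] [Fintype A] {d : ℕ}
    (Φ : Matrix (X × A) (Fin d) ℝ) (α : X × A → ℝ) (hdet : IsUnit (gramXA Φ α).det)
    (μ : X × A → ℝ) (c : ℝ) (v : Fin d → ℝ) :
    modelEstXA Φ α (fun p => μ p - c * (Φ *ᵥ v) p)
      = fun j => modelEstXA Φ α μ j - c * v j := by
  have hfun : (fun p => μ p - c * (Φ *ᵥ v) p) = μ - c • (Φ *ᵥ v) := by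
    funext p; simp [Pi.smul_apply, smul_eq_mul]
  unfold modelEstXA
  rw [hfun, Matrix.mulVec_sub, Matrix.mulVec_smul, Matrix.mulVec_sub, Matrix.mulVec_smul,
    Matrix.mulVec_sub, Matrix.mulVec_smul]
  have hG : (gramXA Φ α)⁻¹ *ᵥ (Φᵀ *ᵥ Matrix.diagonal α *ᵥ Φ *ᵥ v) = v := by
    rw [Matrix.mulVec_mulVec, Matrix.mulVec_mulVec, Matrix.mulVec_mulVec]
    have h1 : (gramXA Φ α)⁻¹ * Φᵀ * Matrix.diagonal α * Φ = 1 := by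
      rw [Matrix.mul_assoc, Matrix.mul_assoc, ← Matrix.mul_assoc Φᵀ,
        show Φᵀ * Matrix.diagonal α * Φ = gramXA Φ α from rfl]
      exact Matrix.nonsing_inv_mul _ hdet
    rw [h1, Matrix.one_mulVec]
  rw [hG]
  funext j
  simp [Pi.sub_apply, Pi.smul_apply, smul_eq_mul]

/-- Lower bound on the per-instant gap in the model space,
contextual case.  If `μ` is an interior point of `C^X = ⋂_x C^x_{OPT(x)}`, then there
is `Δ_min > 0` such that for every admissible sampling distribution `Λ`, every context
`x` and every arm `a ≠ OPT(x)`,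
`φ(x,OPT(x))ᵀ P^Λ(μ) − φ(x,a)ᵀ P^Λ(μ) ≥ Δ_min`. -/
theorem contextual_per_instant_gap_lower_bound [Fintype X] [Fintype A] {d : ℕ}
    (hd : 0 < d) (hA : d < Fintype.card A)
    (Φ : Matrix (X × A) (Fin d) ℝ) (hrank : Φ.rank = d)
    (μ : X × A → ℝ) (opt : X → A)
    (hopt : ∀ x : X, ∀ b : A, b ≠ opt x → μ (x, b) < μ (x, opt x))
    (hint : ∃ δ > (0 : ℝ), ∀ ξ : X × A → ℝ,
      (∀ p, |ξ p - μ p| < δ) → ∀ x : X, ξ ∈ cRobustObs Φ x (opt x)) :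
    ∃ Δmin > (0 : ℝ), ∀ α : X × A → ℝ, IsSimplexXA α → IsUnit (gramXA Φ α).det →
      ∀ x : X, ∀ a : A, a ≠ opt x →
        Δmin ≤ Φ (x, opt x) ⬝ᵥ modelEstXA Φ α μ - Φ (x, a) ⬝ᵥ modelEstXA Φ α μ := by
  obtain ⟨δ, hδ, hint⟩ := hint
  by_cases hXA : Nonempty (X × A)
  · -- the perturbation direction for each context-arm pair
    set v : X × A → (Fin d → ℝ) := fun p j => Φ (p.1, opt p.1) j - Φ (p.1, p.2) j with hv
    -- a bound on the perturbation entries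
    set M : X × A → ℝ :=
      fun p => Finset.univ.sup' Finset.univ_nonempty (fun q : X × A => |(Φ *ᵥ v p) q|) with hM
    have hMle : ∀ p q, |(Φ *ᵥ v p) q| ≤ M p := by
      intro p q
      rw [hM]
      exact Finset.le_sup' (fun q : X × A => |(Φ *ᵥ v p) q|) (Finset.mem_univ q)
    have hM0 : ∀ p, 0 ≤ M p := fun p =>
      le_trans (abs_nonneg ((Φ *ᵥ v p) p)) (hMle p p)
    set ε : X × A → ℝ := fun p => δ / (2 * (M p + 1)) with hε
    have hden : ∀ p, (0:ℝ) < 2 * (M p + 1) := fun p => by nlinarith [hM0 p]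
    have hεpos : ∀ p, 0 < ε p := fun p => div_pos hδ (hden p)
    -- the candidate gap value for each pair
    set f : X × A → ℝ := fun p => if v p = 0 then 1 else ε p * (v p ⬝ᵥ v p) with hf
    have hfpos : ∀ p, 0 < f p := by
      intro p
      by_cases h : v p = 0
      · simp [hf, h]
      · have hvv : 0 < v p ⬝ᵥ v p := by
          rcases lt_or_eq_of_le (Finset.sum_nonneg fun j _ => mul_self_nonneg (v p j)) with h' | h'
          · exact h'
          · exact absurd (dotProduct_self_eq_zero.mp h'.symm) h
        simp only [hf, if_neg h]
        exact mul_pos (hεpos p) hvv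
    refine ⟨Finset.univ.inf' Finset.univ_nonempty f, ?_, ?_⟩
    · exact (Finset.lt_inf'_iff _).mpr fun p _ => hfpos p
    · intro α hα hdet x a ha
      set θ := modelEstXA Φ α μ with hθ
      -- μ itself is in the robust region
      have hμmem := hint μ (fun p => by simpa using hδ) x
      have hμgap : (0:ℝ) < v (x, a) ⬝ᵥ θ := by
        have h1 := hμmem.2 α hα hdet a ha
        have : Φ (x, a) ⬝ᵥ θ < Φ (x, opt x) ⬝ᵥ θ := h1
        have := sub_pos.mpr this
        rw [← sub_dotProduct] at this
        exact this
      have hvne : v (x, a) ≠ 0 := by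
        intro h0
        rw [h0] at hμgap
        simp at hμgap
      -- the perturbed instance
      set ξ : X × A → ℝ := fun p => μ p - ε (x, a) * (Φ *ᵥ v (x, a)) p with hξ
      have hclose : ∀ p, |ξ p - μ p| < δ := by
        intro p
        have h1 : |ξ p - μ p| = ε (x, a) * |(Φ *ᵥ v (x, a)) p| := by
          simp [hξ, abs_mul, abs_of_pos (hεpos (x, a))]
        rw [h1, hε]
        rw [div_mul_eq_mul_div, div_lt_iff₀ (hden (x, a))]
        have h2 : |(Φ *ᵥ v (x, a)) p| ≤ M (x, a) := hMle (x, a) p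
        nlinarith [hM0 (x, a)]
      have hξmem := (hint ξ hclose x).2 α hα hdet a ha
      have hEst : modelEstXA Φ α ξ = fun j => θ j - ε (x, a) * v (x, a) j :=
        modelEst_sub_mulVec Φ α hdet μ (ε (x, a)) (v (x, a))
      have hgap2 : (0:ℝ) < v (x, a) ⬝ᵥ (fun j => θ j - ε (x, a) * v (x, a) j) := by
        have h1 : Φ (x, a) ⬝ᵥ modelEstXA Φ α ξ < Φ (x, opt x) ⬝ᵥ modelEstXA Φ α ξ := hξmem
        rw [hEst] at h1
        have := sub_pos.mpr h1
        rw [← sub_dotProduct] at this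
        exact this
      have hdot : v (x, a) ⬝ᵥ (fun j => θ j - ε (x, a) * v (x, a) j)
          = v (x, a) ⬝ᵥ θ - ε (x, a) * (v (x, a) ⬝ᵥ v (x, a)) := by
        simp only [dotProduct, Finset.mul_sum, ← Finset.sum_sub_distrib]
        apply Finset.sum_congr rfl; intro j _; ring
      have hkey : ε (x, a) * (v (x, a) ⬝ᵥ v (x, a)) < v (x, a) ⬝ᵥ θ := by
        rw [hdot] at hgap2; linarith
      have hgoal : Φ (x, opt x) ⬝ᵥ θ - Φ (x, a) ⬝ᵥ θ = v (x, a) ⬝ᵥ θ := by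
        rw [← sub_dotProduct]; rfl
      rw [hgoal]
      calc Finset.univ.inf' Finset.univ_nonempty f ≤ f (x, a) :=
            Finset.inf'_le _ (Finset.mem_univ _)
        _ = ε (x, a) * (v (x, a) ⬝ᵥ v (x, a)) := by simp [hf, if_neg hvne]
        _ ≤ v (x, a) ⬝ᵥ θ := le_of_lt hkey
  · exact ⟨1, one_pos, fun α _ _ x a _ => absurd ⟨(x, a)⟩ hXA⟩

end
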